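/- There exists a continuous surjection from the unit interval [0,1] onto the unit square [0,1]². -/
import Mathlib

set_option maxHeartbeats 1000000

open Function Set Topology

/-- Sum `∑' n, (if x n then a else 0) * c ^ (n+1)`. -/
noncomputable def csum (a c : ℝ) (x : ℕ → Bool) : ℝ :=
  ∑' n, (if x n then a else 0) * c ^ (n + 1)

lemma term_norm_le {a c : ℝ} (hc0 : 0 ≤ c) (hc1 : c < 1) (b : Bool) (n : ℕ) :
    ‖(if b then a else 0) * c ^ (n + 1)‖ ≤ |a| * c ^ n := by
  rw [norm_mul, Real.norm_eq_abs, Real.norm_eq_abs, abs_of_nonneg (pow_nonneg hc0 _)]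
  have h1 : |if b then a else 0| ≤ |a| := by split <;> simp
  have h2 : c ^ (n + 1) ≤ c ^ n := pow_le_pow_of_le_one hc0 hc1.le (by omega)
  exact mul_le_mul h1 h2 (pow_nonneg hc0 _) (abs_nonneg _)

lemma summable_csum (a : ℝ) {c : ℝ} (hc0 : 0 ≤ c) (hc1 : c < 1) (x : ℕ → Bool) :
    Summable (fun n => (if x n then a else 0) * c ^ (n + 1)) :=
  Summable.of_norm_bounded (g := fun n => |a| * c ^ n)
    ((summable_geometric_of_lt_one hc0 hc1).mul_left _)
    (fun n => term_norm_le hc0 hc1 (x n) n)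

lemma csum_nonneg {a c : ℝ} (ha : 0 ≤ a) (hc0 : 0 ≤ c) (x : ℕ → Bool) :
    0 ≤ csum a c x :=
  tsum_nonneg fun n => mul_nonneg (by split <;> simp [ha]) (pow_nonneg hc0 _)

lemma csum_le {a c : ℝ} (ha : 0 ≤ a) (hc0 : 0 ≤ c) (hc1 : c < 1) (x : ℕ → Bool) :
    csum a c x ≤ a * c / (1 - c) := by
  have h1 : Summable (fun n : ℕ => a * c ^ (n + 1)) := by
    simpa using summable_csum a hc0 hc1 (fun _ => true)
  have h2 : csum a c x ≤ ∑' n : ℕ, a * c ^ (n + 1) := by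
    apply Summable.tsum_le_tsum _ (summable_csum a hc0 hc1 x) h1
    intro n
    exact mul_le_mul_of_nonneg_right (by split <;> simp [ha]) (pow_nonneg hc0 _)
  refine h2.trans_eq ?_
  have h3 : ∀ n : ℕ, a * c ^ (n + 1) = (a * c) * c ^ n := fun n => by ring
  simp_rw [h3]
  rw [tsum_mul_left, tsum_geometric_of_lt_one hc0 hc1]
  ring

lemma continuous_csum (a : ℝ) {c : ℝ} (hc0 : 0 ≤ c) (hc1 : c < 1) :
    Continuous (fun x : ℕ → Bool => csum a c x) := by
  unfold csum
  apply continuous_tsum (f := fun (n : ℕ) (x : ℕ → Bool) => (if x n then a else 0) * c ^ (n + 1))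
    (u := fun n => |a| * c ^ n)
    (fun n => ?_) ((summable_geometric_of_lt_one hc0 hc1).mul_left _)
    (fun n x => term_norm_le hc0 hc1 (x n) n)
  exact (continuous_of_discreteTopology (f := fun b : Bool =>
    (if b then a else 0) * c ^ (n + 1))).comp (continuous_apply n)

/-- The partial-sum sequence of the greedy binary expansion of `r`. -/
noncomputable def bs (r : ℝ) : ℕ → ℝ
  | 0 => 0
  | n + 1 => bs r n + (if bs r n + (2⁻¹ : ℝ) ^ (n + 1) ≤ r then (2⁻¹ : ℝ) ^ (n + 1) else 0)

/-- The digits of the greedy binary expansion of `r`. -/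
noncomputable def bdig (r : ℝ) (n : ℕ) : Bool :=
  decide (bs r n + (2⁻¹ : ℝ) ^ (n + 1) ≤ r)

lemma bs_invariant {r : ℝ} (h0 : 0 ≤ r) (h1 : r ≤ 1) (n : ℕ) :
    bs r n ≤ r ∧ r ≤ bs r n + (2⁻¹ : ℝ) ^ n := by
  induction n with
  | zero => simpa [bs] using ⟨h0, h1⟩
  | succ n ih =>
    rcases ih with ⟨hl, hu⟩
    have hsplit : (2⁻¹ : ℝ) ^ n = (2⁻¹ : ℝ) ^ (n + 1) + (2⁻¹ : ℝ) ^ (n + 1) := by ring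
    by_cases h : bs r n + (2⁻¹ : ℝ) ^ (n + 1) ≤ r
    · simp only [bs, if_pos h]
      constructor
      · exact h
      · rw [hsplit] at hu; linarith
    · simp only [bs, if_neg h, add_zero]
      exact ⟨hl, by linarith [not_le.mp h]⟩

lemma bs_eq_partial_sum (r : ℝ) (n : ℕ) :
    bs r n = ∑ k ∈ Finset.range n, (if bdig r k then (1 : ℝ) else 0) * (2⁻¹ : ℝ) ^ (k + 1) := by
  induction n with
  | zero => simp [bs]
  | succ n ih =>
    rw [Finset.sum_range_succ, ← ih]
    simp only [bs, bdig, decide_eq_true_eq]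
    by_cases h : bs r n + (2⁻¹ : ℝ) ^ (n + 1) ≤ r
    · rw [if_pos h, if_pos h]; ring
    · rw [if_neg h, if_neg h]; ring

/-- Surjectivity of the binary expansion map onto `[0,1]`. -/
lemma csum_binary_surj {r : ℝ} (h0 : 0 ≤ r) (h1 : r ≤ 1) :
    csum 1 2⁻¹ (bdig r) = r := by
  have hsum := summable_csum (1 : ℝ) (by norm_num : (0:ℝ) ≤ 2⁻¹) (by norm_num) (bdig r)
  have hts := hsum.hasSum.tendsto_sum_nat
  have heq : ∀ n, ∑ k ∈ Finset.range n,
      (if bdig r k then (1 : ℝ) else 0) * (2⁻¹ : ℝ) ^ (k + 1) = bs r n :=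
    fun n => (bs_eq_partial_sum r n).symm
  have hlim : Filter.Tendsto (bs r) Filter.atTop (nhds r) := by
    have hpow : Filter.Tendsto (fun n : ℕ => (2⁻¹ : ℝ) ^ n) Filter.atTop (nhds 0) :=
      tendsto_pow_atTop_nhds_zero_of_lt_one (by norm_num) (by norm_num)
    have hle : ∀ n, r - (2⁻¹ : ℝ) ^ n ≤ bs r n := fun n => by
      linarith [(bs_invariant h0 h1 n).2]
    have hge : ∀ n, bs r n ≤ r := fun n => (bs_invariant h0 h1 n).1
    have h1' : Filter.Tendsto (fun n : ℕ => r - (2⁻¹ : ℝ) ^ n) Filter.atTop (nhds r) := by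
      simpa using (tendsto_const_nhds (x := r)).sub hpow
    exact tendsto_of_tendsto_of_tendsto_of_le_of_le h1' tendsto_const_nhds hle hge
  have hlim2 : Filter.Tendsto (fun n => ∑ k ∈ Finset.range n,
      (if bdig r k then (1 : ℝ) else 0) * (2⁻¹ : ℝ) ^ (k + 1)) Filter.atTop (nhds r) := by
    simpa only [heq] using hlim
  exact tendsto_nhds_unique hts hlim2

/-- Injectivity of the ternary (Cantor) expansion map. -/
lemma csum_ternary_inj : Function.Injective (csum 2 3⁻¹) := by
  intro x y hxy
  by_contra hne
  have hex : ∃ n, x n ≠ y n := by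
    by_contra h
    push_neg at h
    exact hne (funext h)
  classical
  obtain ⟨n, hn, hpre⟩ : ∃ n, x n ≠ y n ∧ ∀ k < n, x k = y k :=
    ⟨Nat.find hex, Nat.find_spec hex, fun k hk => not_not.mp (Nat.find_min hex hk)⟩
  have hc0 : (0:ℝ) ≤ 3⁻¹ := by norm_num
  have hc1 : (3⁻¹:ℝ) < 1 := by norm_num
  have key : ∀ u v : ℕ → Bool, (∀ k < n, u k = v k) → u n = true → v n = false →
      csum 2 3⁻¹ u ≠ csum 2 3⁻¹ v := by
    intro u v hpre' hu hv
    have hsu := summable_csum (2:ℝ) hc0 hc1 u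
    have hsv := summable_csum (2:ℝ) hc0 hc1 v
    have hu' := (Summable.sum_add_tsum_nat_add
      (f := fun k => (if u k then (2:ℝ) else 0) * (3⁻¹:ℝ) ^ (k+1)) (n+1) hsu).symm
    have hv' := (Summable.sum_add_tsum_nat_add
      (f := fun k => (if v k then (2:ℝ) else 0) * (3⁻¹:ℝ) ^ (k+1)) (n+1) hsv).symm
    have hfin : ∑ k ∈ Finset.range (n+1), (if u k then (2:ℝ) else 0) * (3⁻¹:ℝ) ^ (k+1)
        = (∑ k ∈ Finset.range (n+1), (if v k then (2:ℝ) else 0) * (3⁻¹:ℝ) ^ (k+1))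
          + 2 * (3⁻¹:ℝ) ^ (n+1) := by
      rw [Finset.sum_range_succ, Finset.sum_range_succ]
      have hsame : ∑ k ∈ Finset.range n, (if u k then (2:ℝ) else 0) * (3⁻¹:ℝ) ^ (k+1)
          = ∑ k ∈ Finset.range n, (if v k then (2:ℝ) else 0) * (3⁻¹:ℝ) ^ (k+1) :=
        Finset.sum_congr rfl fun k hk => by rw [hpre' k (Finset.mem_range.mp hk)]
      rw [hsame, hu, hv]
      simp
      try ring
    have tail_nonneg :
        0 ≤ ∑' k, (if u (k + (n+1)) then (2:ℝ) else 0) * (3⁻¹:ℝ) ^ ((k + (n+1)) + 1) :=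
      tsum_nonneg fun k => mul_nonneg (by split <;> norm_num) (pow_nonneg hc0 _)
    have tail_le :
        ∑' k, (if v (k + (n+1)) then (2:ℝ) else 0) * (3⁻¹:ℝ) ^ ((k + (n+1)) + 1)
          ≤ (3⁻¹:ℝ) ^ (n+1) := by
      have hrw : ∀ k : ℕ, 2 * (3⁻¹:ℝ) ^ ((k + (n+1)) + 1)
          = (2 * (3⁻¹:ℝ)^(n+2)) * (3⁻¹:ℝ)^k := fun k => by ring
      have hgeo : Summable (fun k : ℕ => 2 * (3⁻¹:ℝ) ^ ((k + (n+1)) + 1)) := by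
        simp_rw [hrw]
        exact (summable_geometric_of_lt_one hc0 hc1).mul_left _
      have hle1 : ∑' k, (if v (k + (n+1)) then (2:ℝ) else 0) * (3⁻¹:ℝ) ^ ((k + (n+1)) + 1)
          ≤ ∑' k : ℕ, 2 * (3⁻¹:ℝ) ^ ((k + (n+1)) + 1) := by
        have hble : ∀ k : ℕ, (if v (k + (n+1)) then (2:ℝ) else 0) * (3⁻¹:ℝ) ^ ((k + (n+1)) + 1)
            ≤ 2 * (3⁻¹:ℝ) ^ ((k + (n+1)) + 1) := fun k =>
          mul_le_mul_of_nonneg_right (by split <;> norm_num) (pow_nonneg hc0 _)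
        have hbnn : ∀ k : ℕ, 0 ≤ (if v (k + (n+1)) then (2:ℝ) else 0) * (3⁻¹:ℝ) ^ ((k + (n+1)) + 1) :=
          fun k => mul_nonneg (by split <;> norm_num) (pow_nonneg hc0 _)
        exact Summable.tsum_le_tsum hble (hgeo.of_nonneg_of_le hbnn hble) hgeo
      refine hle1.trans_eq ?_
      simp_rw [hrw]
      rw [tsum_mul_left, tsum_geometric_of_lt_one hc0 hc1]
      rw [show ((1:ℝ) - 3⁻¹)⁻¹ = 3 / 2 by norm_num, pow_succ]
      ring
    have hpow_pos : (0:ℝ) < (3⁻¹:ℝ) ^ (n+1) := pow_pos (by norm_num) _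
    intro heq
    unfold csum at heq
    rw [hu', hv', hfin] at heq
    linarith
  cases hxn : x n <;> cases hyn : y n
  · exact hn (hxn.trans hyn.symm)
  · exact key y x (fun k hk => (hpre k hk).symm) hyn hxn hxy.symm
  · exact key x y hpre hxn hyn hxy
  · exact hn (hxn.trans hyn.symm)

instance : TietzeExtension (Set.Icc (0:ℝ) 1) :=
  TietzeExtension.of_retract ⟨Subtype.val, continuous_subtype_val⟩
    ⟨Set.projIcc 0 1 zero_le_one, continuous_projIcc⟩
    (by ext x; simp)

/-- There exists a continuous surjection from `[0,1]` onto `[0,1]²` (a space-filling curve). -/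
theorem exists_space_filling_curve :
    ∃ f : Set.Icc (0 : ℝ) 1 → Set.Icc (0 : ℝ) 1 × Set.Icc (0 : ℝ) 1,
      Continuous f ∧ Function.Surjective f := by
  classical
  have hc0 : (0:ℝ) ≤ 2⁻¹ := by norm_num
  have hc1 : (2⁻¹:ℝ) < 1 := by norm_num
  have hd0 : (0:ℝ) ≤ 3⁻¹ := by norm_num
  have hd1 : (3⁻¹:ℝ) < 1 := by norm_num
  have hb_mem : ∀ x : ℕ → Bool, csum 1 2⁻¹ x ∈ Set.Icc (0:ℝ) 1 := fun x =>
    ⟨csum_nonneg zero_le_one hc0 x, (csum_le zero_le_one hc0 hc1 x).trans_eq (by norm_num)⟩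
  have ht_mem : ∀ x : ℕ → Bool, csum 2 3⁻¹ x ∈ Set.Icc (0:ℝ) 1 := fun x =>
    ⟨csum_nonneg (by norm_num) hd0 x, (csum_le (by norm_num) hd0 hd1 x).trans_eq (by norm_num)⟩
  let e : (ℕ → Bool) → Set.Icc (0:ℝ) 1 := fun x => ⟨csum 2 3⁻¹ x, ht_mem x⟩
  have he_cont : Continuous e := Continuous.subtype_mk (continuous_csum 2 hd0 hd1) _
  have he_inj : Function.Injective e := fun x y h =>
    csum_ternary_inj (congrArg Subtype.val h)
  have he : IsClosedEmbedding e := he_cont.isClosedEmbedding he_inj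
  let g : (ℕ → Bool) → Set.Icc (0:ℝ) 1 × Set.Icc (0:ℝ) 1 := fun x =>
    (⟨csum 1 2⁻¹ (fun n => x (2 * n)), hb_mem _⟩,
     ⟨csum 1 2⁻¹ (fun n => x (2 * n + 1)), hb_mem _⟩)
  have hg_cont : Continuous g := by
    apply Continuous.prodMk <;>
      exact Continuous.subtype_mk
        ((continuous_csum 1 hc0 hc1).comp (continuous_pi fun n => continuous_apply _)) _
  have hg_surj : Function.Surjective g := by
    rintro ⟨⟨u, hu0, hu1⟩, ⟨v, hv0, hv1⟩⟩
    refine ⟨fun n => if Even n then bdig u (n / 2) else bdig v (n / 2), ?_⟩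
    have h1 : (fun n => if Even (2 * n) then bdig u ((2 * n) / 2) else bdig v ((2 * n) / 2))
        = bdig u := by
      funext n
      simp [Nat.mul_div_cancel_left n (by norm_num : 0 < 2)]
    have h2 : (fun n => if Even (2 * n + 1) then bdig u ((2 * n + 1) / 2)
        else bdig v ((2 * n + 1) / 2)) = bdig v := by
      funext n
      have hodd : ¬ Even (2 * n + 1) := by simp [Nat.even_add_one, parity_simps]
      simp [hodd, Nat.mul_add_div (by norm_num : 0 < 2)]
    simp only [g, h1, h2]
    ext <;> simp [csum_binary_surj hu0 hu1, csum_binary_surj hv0 hv1]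
  obtain ⟨F, hF⟩ := ContinuousMap.exists_extension' he ⟨g, hg_cont⟩
  refine ⟨F, F.continuous, ?_⟩
  intro p
  obtain ⟨x, hx⟩ := hg_surj p
  exact ⟨e x, by rw [← hx]; exact congrFun hF x⟩
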